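/- Let ε>1 and 0<x<1, and set ψ(x,t)=ε·log(1−xt)−log(1−t) and t_s=(εx−1)/((ε−1)x). Then (i) ψ(x,t_s) = ε·log(ε(1−x)/(ε−1)) − log((1−x)/((ε−1)x)); and (ii) writing δ=εx−1, as δ→0 (i.e. as x→1/ε), ψ(x,t_s) = −ε·δ²/(2(ε−1)) + ε(ε−2)·δ³/(3(ε−1)²) + O(δ⁴). -/

import Mathlib

open Real Filter Topology Asymptotics

lemma log_taylor3 (c : ℝ) :
    (fun δ : ℝ => Real.log (1 - c*δ) + (c*δ + (c*δ)^2/2 + (c*δ)^3/3)) =O[𝓝 0]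
      (fun δ : ℝ => δ ^ 4) := by
  apply Asymptotics.IsBigO.of_bound (2*|c|^4)
  have hr : (0:ℝ) < 1/(2*(|c|+1)) := by positivity
  filter_upwards [Metric.ball_mem_nhds (0:ℝ) hr] with δ hδ
  have hδ' : |δ| ≤ 1/(2*(|c|+1)) := by
    have := mem_ball_zero_iff.mp hδ
    rw [Real.norm_eq_abs] at this; linarith
  have hc0 : (0:ℝ) ≤ |c| := abs_nonneg c
  have hcd : |c*δ| ≤ 1/2 := by
    rw [abs_mul]
    have h1 : |c| * |δ| ≤ |c| * (1/(2*(|c|+1))) := by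
      gcongr
    have h2 : |c| * (1/(2*(|c|+1))) ≤ 1/2 := by
      rw [mul_one_div, div_le_iff₀ (by positivity)]; nlinarith
    linarith
  have key := Real.abs_log_sub_add_sum_range_le (x := c*δ)
    (lt_of_le_of_lt hcd (by norm_num)) 3
  have hsum : (∑ i ∈ Finset.range 3, (c*δ) ^ (i + 1) / ((i:ℝ) + 1))
      = c*δ + (c*δ)^2/2 + (c*δ)^3/3 := by
    simp [Finset.sum_range_succ]; norm_num
  rw [hsum] at key
  norm_num at key
  have hden : (1:ℝ)/2 ≤ 1 - |c*δ| := by linarith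
  have h4 : |c*δ|^4/(1-|c*δ|) ≤ 2*|c*δ|^4 := by
    rw [div_le_iff₀ (by linarith)]
    have hp : (0:ℝ) ≤ |c*δ|^4 := pow_nonneg (abs_nonneg _) 4
    nlinarith [mul_le_mul_of_nonneg_left hden hp]
  have hb : |Real.log (1 - c*δ) + (c*δ + (c*δ)^2/2 + (c*δ)^3/3)| ≤ 2*|c*δ|^4 := by
    rw [add_comm]; exact le_trans key (by rw [← abs_mul]; exact h4)
  calc ‖Real.log (1 - c*δ) + (c*δ + (c*δ)^2/2 + (c*δ)^3/3)‖ ≤ 2*|c*δ|^4 := hb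
  _ = 2*|c|^4 * ‖δ^4‖ := by
      rw [abs_mul, mul_pow, Real.norm_eq_abs, abs_pow]; ring

theorem psi_at_saddle (ε x : ℝ) (hε : 1 < ε) (hx0 : 0 < x) (hx1 : x < 1) :
    (ε * Real.log (1 - x * ((ε * x - 1) / ((ε - 1) * x)))
        - Real.log (1 - (ε * x - 1) / ((ε - 1) * x))
      = ε * Real.log (ε * (1 - x) / (ε - 1)) - Real.log ((1 - x) / ((ε - 1) * x))) ∧
    (fun δ : ℝ =>
        (ε * Real.log (1 - (1 + δ) / ε * ((ε * ((1 + δ) / ε) - 1) / ((ε - 1) * ((1 + δ) / ε))))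
          - Real.log (1 - (ε * ((1 + δ) / ε) - 1) / ((ε - 1) * ((1 + δ) / ε))))
        - (-ε * δ ^ 2 / (2 * (ε - 1)) + ε * (ε - 2) * δ ^ 3 / (3 * (ε - 1) ^ 2)))
      =O[𝓝 0] fun δ : ℝ => δ ^ 4 := by
  have hx : x ≠ 0 := hx0.ne'
  have he1 : (0:ℝ) < ε - 1 := by linarith
  have he : ε - 1 ≠ 0 := he1.ne'
  have hεpos : (0:ℝ) < ε := by linarith
  have hε0 : ε ≠ 0 := hεpos.ne'
  constructor
  · have h1 : 1 - x * ((ε * x - 1) / ((ε - 1) * x)) = ε * (1 - x) / (ε - 1) := by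
      field_simp; ring
    have h2 : 1 - (ε * x - 1) / ((ε - 1) * x) = (1 - x) / ((ε - 1) * x) := by
      field_simp; ring
    rw [h1, h2]
  · have hO := ((log_taylor3 (1/(ε-1))).const_mul_left (ε-1)).add (log_taylor3 (-1))
    refine hO.congr' ?_ EventuallyEq.rfl
    have hr : (0:ℝ) < min (1/2) ((ε-1)/2) := by positivity
    filter_upwards [Metric.ball_mem_nhds (0:ℝ) hr] with δ hδ
    have habs : |δ| < min (1/2) ((ε-1)/2) := by
      simpa [Real.norm_eq_abs] using mem_ball_zero_iff.mp hδ
    have hd1 : |δ| < 1/2 := lt_of_lt_of_le habs (min_le_left _ _)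
    have hd2 : |δ| < (ε-1)/2 := lt_of_lt_of_le habs (min_le_right _ _)
    have habs1 := abs_lt.mp hd1
    have habs2 := abs_lt.mp hd2
    have hδ1 : (0:ℝ) < 1 + δ := by linarith [habs1.1]
    have hδ1' : (1:ℝ) + δ ≠ 0 := hδ1.ne'
    have hA : (0:ℝ) < 1 - δ/(ε-1) := by
      rw [sub_pos, div_lt_one he1]; linarith [habs2.2]
    have hA' : (1:ℝ) - δ/(ε-1) ≠ 0 := hA.ne'
    have h1 : 1 - (1 + δ) / ε * ((ε * ((1 + δ) / ε) - 1) / ((ε - 1) * ((1 + δ) / ε)))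
        = 1 - δ/(ε-1) := by
      field_simp; ring
    have h2 : 1 - (ε * ((1 + δ) / ε) - 1) / ((ε - 1) * ((1 + δ) / ε))
        = (1 - δ/(ε-1)) / (1 + δ) := by
      field_simp; ring
    have hc : 1 - 1/(ε-1)*δ = 1 - δ/(ε-1) := by ring
    have hm : 1 - (-1)*δ = 1 + δ := by ring
    simp only [hc, hm, h1, h2, Real.log_div hA' hδ1']
    field_simp
    ring
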